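/- arXiv:2302.00845 — 3 statements merged into one kernel-verified Lean document; each statement's English description precedes it below -/
import Mathlib

section
/- Let z_1, …, z_N be vectors in ℝ^d with mean z̄ = (1/N)·Σ_j z_j, let π be a permutation of [N], and let s_1, …, s_N ∈ {+1, -1}. Define π' as the permutation obtained by listing, in order, the indices π(j) with s_{π(j)} = +1 followed by the indices π(j) with s_{π(j)} = -1 in reverse order. Then max_{k ∈ [N]} ‖Σ_{j=1}^k (z_{π'(j)} - z̄)‖_∞ ≤ (1/2)·max_{k ∈ [N]} ‖Σ_{j=1}^k s_{π(j)}(z_{π(j)} - z̄)‖_∞ + (1/2)·max_{k ∈ [N]} ‖Σ_{j=1}^k (z_{π(j)} - z̄)‖_∞. -/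
/-- Key balancing lemma: a prefix of the `p`-filtered list has `f`-sum equal to half the
sum of the `g`-sum and `f`-sum over some prefix of the original list. -/
lemma herding_key {α E : Type*} [AddCommGroup E] [Module ℝ E] (f g : α → E) (p : α → Bool)
    (hfg : ∀ a, if p a = true then g a = f a else g a = -f a) :
    ∀ (L : List α) (k : ℕ), ∃ m ≤ L.length,
      (((L.filter p).take k).map f).sum
        = (2⁻¹ : ℝ) • ((((L.take m).map g).sum) + (((L.take m).map f).sum)) := by
  intro L
  induction L with
  | nil => intro k; exact ⟨0, le_refl _, by simp⟩
  | cons a L ih =>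
    intro k
    cases k with
    | zero => exact ⟨0, Nat.zero_le _, by simp⟩
    | succ k' =>
      by_cases hp : p a = true
      · obtain ⟨m, hm, heq⟩ := ih k'
        refine ⟨m + 1, by simpa using hm, ?_⟩
        have hga : g a = f a := by have := hfg a; rw [if_pos hp] at this; exact this
        simp only [List.filter_cons, hp, if_pos, List.take_succ_cons, List.map_cons,
          List.sum_cons, heq, hga]
        module
      · obtain ⟨m, hm, heq⟩ := ih (k' + 1)
        refine ⟨m + 1, by simpa using hm, ?_⟩
        have hga : g a = -f a := by have := hfg a; rw [if_neg hp] at this; exact this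
        have hpa : p a = false := by simpa using hp
        simp only [List.filter_cons, hpa, Bool.false_eq_true, if_false, List.take_succ_cons,
          List.map_cons, List.sum_cons, hga]
        rw [heq]
        module

theorem stmt2 {N d : ℕ} (z : Fin N → (Fin d → ℝ)) (s : Fin N → ℝ)
    (hs : ∀ j, s j = 1 ∨ s j = -1) (π : Equiv.Perm (Fin N))
    (zbar : Fin d → ℝ) (hzbar : zbar = (N : ℝ)⁻¹ • ∑ j, z j)
    (A B : ℝ)
    (hA : ∀ k ≤ N,
      ‖(((((List.finRange N).map π).take k).map (fun i => s i • (z i - zbar))).sum)‖ ≤ A)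
    (hB : ∀ k ≤ N,
      ‖(((((List.finRange N).map π).take k).map (fun i => z i - zbar)).sum)‖ ≤ B) :
    ∀ k ≤ N,
      ‖((((((List.finRange N).map π).filter (fun i => decide (s i = 1)))
          ++ ((((List.finRange N).map π).filter (fun i => decide (s i = -1))).reverse)).take k).map
          (fun i => z i - zbar)).sum‖ ≤ (1/2) * A + (1/2) * B := by
  classical
  set L : List (Fin N) := (List.finRange N).map π with hL
  set f : Fin N → (Fin d → ℝ) := fun i => z i - zbar with hf
  set g : Fin N → (Fin d → ℝ) := fun i => s i • (z i - zbar) with hg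
  set p : Fin N → Bool := fun i => decide (s i = 1) with hp
  set q : Fin N → Bool := fun i => decide (s i = -1) with hq
  have hLlen : L.length = N := by simp [hL]
  -- q = !p pointwise
  have hpq : ∀ a, q a = !(p a) := by
    intro a
    rcases hs a with h | h <;> simp [hp, hq, h] <;> norm_num
  have hMfilt : L.filter q = L.filter (fun a => !(p a)) :=
    List.filter_congr (fun a _ => hpq a)
  -- partition perm
  have hperm : (L.filter p ++ L.filter (fun a => !(p a))).Perm L :=
    List.filter_append_perm p L
  have hlen : (L.filter p).length + (L.filter q).length = N := by
    rw [hMfilt, ← List.length_append, hperm.length_eq, hLlen]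
  -- total sum of f over L is 0
  have hsum0 : (L.map f).sum = 0 := by
    have h1 : (L.map f).sum = ∑ i, f (π i) := by
      rw [hL, List.map_map, ← Fin.sum_univ_def]
      rfl
    rw [h1, Equiv.sum_comp π f]
    have : ∑ i, f i = (∑ i, z i) - (N : ℕ) • zbar := by
      simp [hf, Finset.sum_sub_distrib]
    rw [this, hzbar]
    rcases Nat.eq_zero_or_pos N with h0 | h0
    · subst h0; simp
    · have hN : (N : ℝ) ≠ 0 := Nat.cast_ne_zero.mpr h0.ne'
      rw [← Nat.cast_smul_eq_nsmul ℝ, smul_smul, mul_inv_cancel₀ hN, one_smul, sub_self]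
  -- hypothesis for herding_key with p
  have hfg : ∀ a, if p a = true then g a = f a else g a = -f a := by
    intro a
    rcases hs a with h | h <;> simp [hp, hf, hg, h] <;> norm_num
  have hfg' : ∀ a, if q a = true then (fun i => -(g i)) a = f a
      else (fun i => -(g i)) a = -f a := by
    intro a
    rcases hs a with h | h <;> simp [hq, hf, hg, h] <;> norm_num
  intro k hk
  rw [List.take_append, List.map_append, List.sum_append]
  by_cases hkP : k ≤ (L.filter p).length
  · -- only positives
    have ht : k - (L.filter p).length = 0 := Nat.sub_eq_zero_of_le hkP
    rw [ht]
    simp only [List.take_zero, List.map_nil, List.sum_nil, add_zero]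
    obtain ⟨m, hm, heq⟩ := herding_key f g p hfg L k
    rw [heq, norm_smul]
    have hAm := hA m (hLlen ▸ hm)
    have hBm := hB m (hLlen ▸ hm)
    have h1 : ‖((L.take m).map g).sum + ((L.take m).map f).sum‖
        ≤ ‖((L.take m).map g).sum‖ + ‖((L.take m).map f).sum‖ := norm_add_le _ _
    have : ‖(2⁻¹ : ℝ)‖ = 2⁻¹ := by norm_num
    rw [this]
    nlinarith [norm_nonneg (((L.take m).map g).sum), norm_nonneg (((L.take m).map f).sum)]
  · -- all positives plus some negatives from the end
    push_neg at hkP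
    have hPk : (L.filter p).take k = L.filter p := List.take_of_length_le hkP.le
    set t : ℕ := k - (L.filter p).length with htdef
    have htM : t ≤ (L.filter q).length := by omega
    -- sum over reversed take
    have hrev : ((((L.filter q).reverse.take t)).map f).sum
        = (((L.filter q).drop ((L.filter q).length - t)).map f).sum := by
      rw [List.take_reverse, List.map_reverse, List.sum_reverse]
    set m' : ℕ := (L.filter q).length - t with hm'def
    have hdrop : (((L.filter q).drop m').map f).sum
        = ((L.filter q).map f).sum - (((L.filter q).take m').map f).sum := by
      have := List.take_append_drop m' (L.filter q)
      calc (((L.filter q).drop m').map f).sum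
          = (((L.filter q).take m').map f).sum + (((L.filter q).drop m').map f).sum
            - (((L.filter q).take m').map f).sum := by abel
        _ = ((L.filter q).map f).sum - (((L.filter q).take m').map f).sum := by
            rw [← List.sum_append, ← List.map_append, this]
    -- total: filter p sum + filter q sum = 0
    have htot : ((L.filter p).map f).sum + ((L.filter q).map f).sum = 0 := by
      rw [hMfilt, ← List.sum_append, ← List.map_append, (hperm.map f).sum_eq, hsum0]
    obtain ⟨m, hm, heq⟩ := herding_key f (fun i => -(g i)) q hfg' L m'
    have hexpr : ((L.filter p).map f).sum + (((L.filter q).reverse.take t).map f).sum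
        = -(2⁻¹ : ℝ) • ((-(((L.take m).map g).sum)) + (((L.take m).map f).sum)) := by
      rw [hrev, hdrop]
      have hneg : ∀ l : List (Fin N), (l.map fun i => -(g i)).sum = -((l.map g).sum) := by
        intro l; induction l with
        | nil => simp
        | cons a l ih => simp only [List.map_cons, List.sum_cons, ih]; abel
      rw [hneg] at heq
      have h2 : ((L.filter p).map f).sum + (((L.filter q).map f).sum
          - (((L.filter q).take m').map f).sum) = -(((L.filter q).take m').map f).sum := by
        have := htot; abel_nf; abel_nf at this; linear_combination (norm := abel) this
      rw [h2, heq]; module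
    rw [hPk, hexpr]
    rw [norm_smul]
    have hAm := hA m (hLlen ▸ hm)
    have hBm := hB m (hLlen ▸ hm)
    have h1 : ‖(-(((L.take m).map g).sum)) + (((L.take m).map f).sum)‖
        ≤ ‖((L.take m).map g).sum‖ + ‖((L.take m).map f).sum‖ := by
      calc _ ≤ ‖-(((L.take m).map g).sum)‖ + ‖((L.take m).map f).sum‖ := norm_add_le _ _
        _ = _ := by rw [norm_neg]
    have : ‖(-2⁻¹ : ℝ)‖ = 2⁻¹ := by norm_num
    rw [this]
    nlinarith [norm_nonneg (((L.take m).map g).sum), norm_nonneg (((L.take m).map f).sum)]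
end

section
/- Let m, n ∈ ℕ with n even, and let z_{i,j} ∈ ℝ^d for i ∈ [m], j ∈ [n]. Suppose ‖Σ_{i=1}^m Σ_{j=1}^n z_{i,j}‖_∞ ≤ c₁, and suppose the pair differences y_{i,k} = z_{i,2k-1} - z_{i,2k} together with signs s_{i,k} ∈ {±1} satisfy, for every prefix P of the flattened sequence (ordered by k then i), ‖Σ over the first P pairs of s_{i,k}·y_{i,k}‖_∞ ≤ A for some A ≥ 0. Define per-worker permutations π'_i by listing the elements receiving sign +1 in order, followed by the elements receiving sign -1 in reverse order. Then max_{l ∈ [n]} ‖Σ_{i=1}^m Σ_{j=1}^l z_{i,π'_i(j)}‖_∞ ≤ (1/2)·max_{l ∈ [n]} ‖Σ_{i=1}^m Σ_{j=1}^l z_{i,j}‖_∞ + c₁ + A. -/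
open Finset

theorem reindexLem {M : Type*} [AddCommMonoid M] (m : ℕ) (hm : 0 < m) (l : ℕ)
    (f : ℕ → ℕ → M) :
    ∑ q ∈ range (m * l), f (q % m + 1) (q / m + 1)
      = ∑ k ∈ Icc 1 l, ∑ i ∈ Icc 1 m, f i k := by
  induction l with
  | zero => simp
  | succ l ih =>
    rw [Nat.mul_succ, Finset.sum_range_add, ih, Finset.sum_Icc_succ_top (by omega)]
    congr 1
    rw [show Icc 1 m = Ico 1 (m+1) from by rw [Finset.Ico_add_one_right_eq_Icc], Finset.sum_Ico_eq_sum_range]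
    simp only [Nat.add_sub_cancel]
    refine Finset.sum_congr rfl fun x hx => ?_
    rw [Finset.mem_range] at hx
    have h1 : (m * l + x) % m = x := by
      rw [Nat.mul_add_mod, Nat.mod_eq_of_lt hx]
    have h2 : (m * l + x) / m = l := by
      rw [Nat.mul_add_div hm, Nat.div_eq_of_lt hx, Nat.add_zero]
    rw [h1, h2, add_comm 1 x]

theorem pairLem {M : Type*} [AddCommMonoid M] (g : ℕ → M) (l : ℕ) :
    ∑ j ∈ Icc 1 (2*l), g j = ∑ k ∈ Icc 1 l, (g (2*k-1) + g (2*k)) := by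
  induction l with
  | zero => simp
  | succ l ih =>
    rw [show 2*(l+1) = (2*l+1)+1 from by ring]
    rw [Finset.sum_Icc_succ_top (a := 1) (by omega),
        Finset.sum_Icc_succ_top (a := 1) (by omega), ih,
        Finset.sum_Icc_succ_top (a := 1) (by omega)]
    rw [show 2*(l+1)-1 = 2*l+1 from by omega, show 2*(l+1) = 2*l+1+1 from by omega,
      add_assoc]

theorem reflectLem {M : Type*} [AddCommMonoid M] (g : ℕ → M) (a n : ℕ) :
    ∑ j ∈ Ioc a n, g j = ∑ k ∈ Icc 1 (n - a), g (n + 1 - k) := by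
  refine Finset.sum_nbij' (fun j => n + 1 - j) (fun k => n + 1 - k) ?_ ?_ ?_ ?_ ?_ <;>
    intro x hx <;> simp only [Finset.mem_Ioc, Finset.mem_Icc] at hx ⊢
  · omega
  · omega
  · omega
  · omega
  · congr 1; omega

theorem splitLem {M : Type*} [AddCommMonoid M] (g : ℕ → M) (r n : ℕ) (h : r ≤ n) :
    ∑ j ∈ Icc 1 n, g j = (∑ j ∈ Icc 1 r, g j) + ∑ j ∈ Ioc r n, g j := by
  rw [show Icc 1 n = Ioc 0 n from by ext x; simp; omega,
      show Icc 1 r = Ioc 0 r from by ext x; simp; omega,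
      Finset.sum_Ioc_consecutive _ (Nat.zero_le r) h]

theorem stmt4 {d : ℕ} (m n : ℕ) (hm : 0 < m) (hn : 0 < n) (heven : Even n)
    (z : ℕ → ℕ → (Fin d → ℝ)) (s : ℕ → ℕ → ℝ)
    (hs : ∀ i k, s i k = 1 ∨ s i k = -1)
    (c₁ A : ℝ) (hA0 : 0 ≤ A)
    (hc₁ : ‖∑ i ∈ Finset.Icc 1 m, ∑ j ∈ Finset.Icc 1 n, z i j‖ ≤ c₁)
    (hsigned : ∀ P ≤ m * (n / 2),
      ‖∑ q ∈ Finset.range P,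
        s (q % m + 1) (q / m + 1) • (z (q % m + 1) (2 * (q / m + 1) - 1)
          - z (q % m + 1) (2 * (q / m + 1)))‖ ≤ A)
    (π' : ℕ → ℕ → ℕ)
    (hπ' : ∀ i ∈ Finset.Icc 1 m, ∀ j ∈ Finset.Icc 1 n,
      π' i j = if j ≤ n / 2
        then (if s i j = 1 then 2 * j - 1 else 2 * j)
        else (if s i (n + 1 - j) = 1 then 2 * (n + 1 - j) else 2 * (n + 1 - j) - 1))
    (B : ℝ)
    (hB : ∀ l ∈ Finset.Icc 1 n,
      ‖∑ i ∈ Finset.Icc 1 m, ∑ j ∈ Finset.Icc 1 l, z i j‖ ≤ B) :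
    ∀ l ∈ Finset.Icc 1 n,
      ‖∑ i ∈ Finset.Icc 1 m, ∑ j ∈ Finset.Icc 1 l, z i (π' i j)‖
        ≤ (1/2) * B + c₁ + A := by
  obtain ⟨r, hr⟩ := heven
  have hd2 : n / 2 = r := by omega
  -- selected element formula, j in [1, r]
  have hsel : ∀ i ∈ Icc 1 m, ∀ j ∈ Icc 1 r,
      z i (π' i j) = (2⁻¹ : ℝ) • (z i (2*j-1) + z i (2*j))
        + (2⁻¹ : ℝ) • ((s i j) • (z i (2*j-1) - z i (2*j))) := by
    intro i hi j hj
    rw [mem_Icc] at hj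
    have hp := hπ' i hi j (by rw [mem_Icc]; omega)
    rw [if_pos (by omega : j ≤ n / 2)] at hp
    rcases hs i j with h1 | h1 <;> rw [h1] at hp ⊢ <;> rw [hp]
    · rw [if_pos rfl]; module
    · rw [if_neg (by norm_num)]; module
  -- complement element formula, k in [1, r]
  have hcom : ∀ i ∈ Icc 1 m, ∀ k ∈ Icc 1 r,
      z i (π' i (n + 1 - k)) = (2⁻¹ : ℝ) • (z i (2*k-1) + z i (2*k))
        - (2⁻¹ : ℝ) • ((s i k) • (z i (2*k-1) - z i (2*k))) := by
    intro i hi k hk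
    rw [mem_Icc] at hk
    have hp := hπ' i hi (n + 1 - k) (by rw [mem_Icc]; omega)
    rw [if_neg (by omega : ¬ (n + 1 - k ≤ n / 2)),
        show n + 1 - (n + 1 - k) = k from by omega] at hp
    rcases hs i k with h1 | h1 <;> rw [h1] at hp ⊢ <;> rw [hp]
    · rw [if_pos rfl]; module
    · rw [if_neg (by norm_num)]; module
  -- signed-sum bound
  have hW : ∀ t ≤ r, ‖∑ k ∈ Icc 1 t, ∑ i ∈ Icc 1 m,
      (s i k) • (z i (2*k-1) - z i (2*k))‖ ≤ A := by
    intro t ht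
    have h0 := hsigned (m * t) (by rw [hd2]; exact Nat.mul_le_mul_left m ht)
    have e : (∑ q ∈ Finset.range (m * t),
        s (q % m + 1) (q / m + 1) • (z (q % m + 1) (2 * (q / m + 1) - 1)
          - z (q % m + 1) (2 * (q / m + 1))))
        = ∑ k ∈ Icc 1 t, ∑ i ∈ Icc 1 m, (s i k) • (z i (2*k-1) - z i (2*k)) :=
      reindexLem m hm t (fun i k => (s i k) • (z i (2*k-1) - z i (2*k)))
    rwa [e] at h0
  -- prefix identity for t ≤ r
  have hfirst : ∀ t ≤ r, (∑ i ∈ Icc 1 m, ∑ j ∈ Icc 1 t, z i (π' i j))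
      = (2⁻¹:ℝ) • (∑ i ∈ Icc 1 m, ∑ j ∈ Icc 1 (2*t), z i j)
        + (2⁻¹:ℝ) • (∑ k ∈ Icc 1 t, ∑ i ∈ Icc 1 m,
            (s i k) • (z i (2*k-1) - z i (2*k))) := by
    intro t ht
    calc (∑ i ∈ Icc 1 m, ∑ j ∈ Icc 1 t, z i (π' i j))
        = ∑ i ∈ Icc 1 m, ∑ j ∈ Icc 1 t,
            ((2⁻¹ : ℝ) • (z i (2*j-1) + z i (2*j))
              + (2⁻¹ : ℝ) • ((s i j) • (z i (2*j-1) - z i (2*j)))) := by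
          refine Finset.sum_congr rfl fun i hi => Finset.sum_congr rfl fun j hj => ?_
          exact hsel i hi j (by rw [mem_Icc] at hj ⊢; omega)
      _ = (2⁻¹:ℝ) • (∑ i ∈ Icc 1 m, ∑ j ∈ Icc 1 t, (z i (2*j-1) + z i (2*j)))
            + (2⁻¹:ℝ) • (∑ i ∈ Icc 1 m, ∑ j ∈ Icc 1 t,
                (s i j) • (z i (2*j-1) - z i (2*j))) := by
          rw [Finset.smul_sum, Finset.smul_sum, ← Finset.sum_add_distrib]
          refine Finset.sum_congr rfl fun i _ => ?_
          rw [Finset.smul_sum, Finset.smul_sum, ← Finset.sum_add_distrib]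
      _ = _ := by
          congr 1
          · congr 1
            exact Finset.sum_congr rfl fun i _ => (pairLem (z i) t).symm
          · congr 1
            exact Finset.sum_comm
  -- suffix identity for l ≥ r
  have hsuffix : ∀ l, r ≤ l → l ≤ n →
      (∑ i ∈ Icc 1 m, ∑ j ∈ Ioc l n, z i (π' i j))
      = (2⁻¹:ℝ) • (∑ i ∈ Icc 1 m, ∑ j ∈ Icc 1 (2*(n-l)), z i j)
        - (2⁻¹:ℝ) • (∑ k ∈ Icc 1 (n-l), ∑ i ∈ Icc 1 m,
            (s i k) • (z i (2*k-1) - z i (2*k))) := by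
    intro l hrl hln
    calc (∑ i ∈ Icc 1 m, ∑ j ∈ Ioc l n, z i (π' i j))
        = ∑ i ∈ Icc 1 m, ∑ k ∈ Icc 1 (n-l), z i (π' i (n + 1 - k)) := by
          refine Finset.sum_congr rfl fun i hi => ?_
          exact reflectLem (fun j => z i (π' i j)) l n
      _ = ∑ i ∈ Icc 1 m, ∑ k ∈ Icc 1 (n-l),
            ((2⁻¹ : ℝ) • (z i (2*k-1) + z i (2*k))
              - (2⁻¹ : ℝ) • ((s i k) • (z i (2*k-1) - z i (2*k)))) := by
          refine Finset.sum_congr rfl fun i hi => Finset.sum_congr rfl fun k hk => ?_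
          exact hcom i hi k (by rw [mem_Icc] at hk ⊢; omega)
      _ = (2⁻¹:ℝ) • (∑ i ∈ Icc 1 m, ∑ k ∈ Icc 1 (n-l), (z i (2*k-1) + z i (2*k)))
            - (2⁻¹:ℝ) • (∑ i ∈ Icc 1 m, ∑ k ∈ Icc 1 (n-l),
                (s i k) • (z i (2*k-1) - z i (2*k))) := by
          rw [Finset.smul_sum, Finset.smul_sum, ← Finset.sum_sub_distrib]
          refine Finset.sum_congr rfl fun i _ => ?_
          rw [Finset.smul_sum, Finset.smul_sum, ← Finset.sum_sub_distrib]
      _ = _ := by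
          congr 1
          · congr 1
            exact Finset.sum_congr rfl fun i _ => (pairLem (z i) (n-l)).symm
          · congr 1
            exact Finset.sum_comm
  -- full-prefix identity
  have hfull : (∑ i ∈ Icc 1 m, ∑ j ∈ Icc 1 n, z i (π' i j))
      = ∑ i ∈ Icc 1 m, ∑ j ∈ Icc 1 n, z i j := by
    have e1 : (∑ i ∈ Icc 1 m, ∑ j ∈ Icc 1 n, z i (π' i j))
        = (∑ i ∈ Icc 1 m, ∑ j ∈ Icc 1 r, z i (π' i j))
          + ∑ i ∈ Icc 1 m, ∑ j ∈ Ioc r n, z i (π' i j) := by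
      rw [← Finset.sum_add_distrib]
      exact Finset.sum_congr rfl fun i _ =>
        splitLem (fun j => z i (π' i j)) r n (by omega)
    rw [e1, hfirst r le_rfl, hsuffix r le_rfl (by omega),
        show n - r = r from by omega, show 2*r = n from by omega]
    module
  have hc0 : 0 ≤ c₁ := le_trans (norm_nonneg _) hc₁
  have hB0 : 0 ≤ B := le_trans (norm_nonneg _) (hB 1 (by rw [mem_Icc]; omega))
  have hhalf : ‖(2⁻¹ : ℝ)‖ = 2⁻¹ := by rw [Real.norm_eq_abs]; norm_num
  intro l hl
  rw [mem_Icc] at hl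
  by_cases hcase : l ≤ r
  · rw [hfirst l hcase]
    have h1 : ‖∑ i ∈ Icc 1 m, ∑ j ∈ Icc 1 (2*l), z i j‖ ≤ B :=
      hB (2*l) (by rw [mem_Icc]; omega)
    have h2 := hW l hcase
    have h3 := norm_add_le
      ((2⁻¹:ℝ) • (∑ i ∈ Icc 1 m, ∑ j ∈ Icc 1 (2*l), z i j))
      ((2⁻¹:ℝ) • (∑ k ∈ Icc 1 l, ∑ i ∈ Icc 1 m,
        (s i k) • (z i (2*k-1) - z i (2*k))))
    rw [norm_smul, norm_smul, hhalf] at h3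
    refine le_trans h3 ?_
    nlinarith
  · have e1 : (∑ i ∈ Icc 1 m, ∑ j ∈ Icc 1 l, z i (π' i j))
        = (∑ i ∈ Icc 1 m, ∑ j ∈ Icc 1 n, z i j)
          - ((2⁻¹:ℝ) • (∑ i ∈ Icc 1 m, ∑ j ∈ Icc 1 (2*(n-l)), z i j)
            - (2⁻¹:ℝ) • (∑ k ∈ Icc 1 (n-l), ∑ i ∈ Icc 1 m,
                (s i k) • (z i (2*k-1) - z i (2*k)))) := by
      have e2 : (∑ i ∈ Icc 1 m, ∑ j ∈ Icc 1 n, z i (π' i j))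
          = (∑ i ∈ Icc 1 m, ∑ j ∈ Icc 1 l, z i (π' i j))
            + ∑ i ∈ Icc 1 m, ∑ j ∈ Ioc l n, z i (π' i j) := by
        rw [← Finset.sum_add_distrib]
        exact Finset.sum_congr rfl fun i _ =>
          splitLem (fun j => z i (π' i j)) l n (by omega)
      rw [hfull] at e2
      rw [hsuffix l (by omega) hl.2] at e2
      rw [e2]; abel
    rw [e1]
    have hX : ‖∑ i ∈ Icc 1 m, ∑ j ∈ Icc 1 (2*(n-l)), z i j‖ ≤ B := by
      rcases eq_or_lt_of_le hl.2 with he | hlt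
      · rw [show 2*(n-l) = 0 from by omega]
        simpa using hB0
      · exact hB _ (by rw [mem_Icc]; omega)
    have hY := hW (n-l) (by omega)
    have h3 := norm_sub_le
      ((2⁻¹:ℝ) • (∑ i ∈ Icc 1 m, ∑ j ∈ Icc 1 (2*(n-l)), z i j))
      ((2⁻¹:ℝ) • (∑ k ∈ Icc 1 (n-l), ∑ i ∈ Icc 1 m,
        (s i k) • (z i (2*k-1) - z i (2*k))))
    rw [norm_smul, norm_smul, hhalf] at h3
    have h4 := norm_sub_le (∑ i ∈ Icc 1 m, ∑ j ∈ Icc 1 n, z i j)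
      ((2⁻¹:ℝ) • (∑ i ∈ Icc 1 m, ∑ j ∈ Icc 1 (2*(n-l)), z i j)
        - (2⁻¹:ℝ) • (∑ k ∈ Icc 1 (n-l), ∑ i ∈ Icc 1 m,
            (s i k) • (z i (2*k-1) - z i (2*k))))
    refine le_trans h4 ?_
    nlinarith
end

section
/- Let z_1, …, z_N ∈ ℝ^d and s_1, …, s_N ∈ {+1, -1}. Suppose max_{k∈[N]} ‖Σ_{j=1}^k s_j z_j‖_∞ ≤ A and ‖Σ_{j=1}^N z_j‖_∞ ≤ c₁. Let π' be the permutation placing indices j with s_j = +1 first (in increasing order of j) followed by indices with s_j = -1 in decreasing order of j. Then max_{k∈[N]} ‖Σ_{l=1}^k z_{π'(l)}‖_∞ ≤ (1/2)·max_{k∈[N]} ‖Σ_{j=1}^k z_j‖_∞ + (1/2)·A + c₁. -/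
section Aux

variable {α : Type*} {M : Type*} [AddCommGroup M] [Module ℝ M]

lemma aux_exists_take_filter (p : α → Bool) : ∀ (l : List α) (k : ℕ),
    ∃ m ≤ l.length, (l.take m).filter p = (l.filter p).take k := by
  intro l
  induction l with
  | nil => intro k; exact ⟨0, by simp, by simp⟩
  | cons a l ih =>
    intro k
    cases k with
    | zero => exact ⟨0, by simp, by simp⟩
    | succ k =>
      by_cases hpa : p a
      · obtain ⟨m, hm, hfm⟩ := ih k
        exact ⟨m + 1, by simpa using hm, by simp [List.filter_cons, hpa, hfm]⟩
      · obtain ⟨m, hm, hfm⟩ := ih (k + 1)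
        exact ⟨m + 1, by simpa using hm, by simp [List.filter_cons, hpa, hfm]⟩

lemma aux_sum_two (p : α → Bool) (f g : α → M)
    (h : ∀ a, f a = if p a then (2:ℝ) • g a else 0) (l : List α) :
    (l.map f).sum = (2:ℝ) • ((l.filter p).map g).sum := by
  induction l with
  | nil => simp
  | cons a l ih =>
    by_cases hpa : p a <;> simp [List.filter_cons, hpa, ih, h a, smul_add]

lemma aux_sum_map_add (f g : α → M) (l : List α) :
    (l.map (fun a => f a + g a)).sum = (l.map f).sum + (l.map g).sum := by
  induction l with
  | nil => simp
  | cons a l ih => simp only [List.map_cons, List.sum_cons, ih]; abel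

lemma aux_sum_map_sub (f g : α → M) (l : List α) :
    (l.map (fun a => f a - g a)).sum = (l.map f).sum - (l.map g).sum := by
  induction l with
  | nil => simp
  | cons a l ih => simp only [List.map_cons, List.sum_cons, ih]; abel

lemma aux_sum_split (p q : α → Bool) (z : α → M)
    (h : ∀ a, (p a = true ∧ q a = false) ∨ (p a = false ∧ q a = true)) (l : List α) :
    (l.map z).sum = ((l.filter p).map z).sum + ((l.filter q).map z).sum := by
  induction l with
  | nil => simp
  | cons a l ih =>
    rcases h a with ⟨h1, h2⟩ | ⟨h1, h2⟩ <;>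
      simp only [List.filter_cons, h1, h2, if_true, if_false, cond_true, cond_false, Bool.false_eq_true,
        List.map_cons, List.sum_cons, ih] <;> abel

end Aux

theorem stmt18 {N d : ℕ} (z : Fin N → (Fin d → ℝ)) (s : Fin N → ℝ)
    (hs : ∀ j, s j = 1 ∨ s j = -1) (A c₁ B : ℝ)
    (hA : ∀ k ≤ N, ‖(((List.finRange N).take k).map (fun j => s j • z j)).sum‖ ≤ A)
    (hc₁ : ‖∑ j, z j‖ ≤ c₁)
    (hB : ∀ k ≤ N, ‖(((List.finRange N).take k).map (fun j => z j)).sum‖ ≤ B) :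
    ∀ k ≤ N,
      ‖(((((List.finRange N).filter (fun j => decide (s j = 1)))
          ++ (((List.finRange N).filter (fun j => decide (s j = -1))).reverse)).take k).map
          (fun j => z j)).sum‖ ≤ (1/2)*B + (1/2)*A + c₁ := by
  intro k hk
  set p : Fin N → Bool := fun j => decide (s j = 1) with hp
  set q : Fin N → Bool := fun j => decide (s j = -1) with hq
  set P := (List.finRange N).filter p with hP
  set Q := (List.finRange N).filter q with hQ
  have hc0 : 0 ≤ c₁ := le_trans (norm_nonneg _) hc₁
  -- general prefix bound for filtered lists
  have hprefix : ∀ (r : Fin N → Bool) (f : Fin N → Fin d → ℝ),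
      (∀ a, f a = if r a then (2:ℝ) • z a else 0) →
      (∀ m ≤ N, ‖(((List.finRange N).take m).map f).sum‖ ≤ B + A) →
      ∀ kk, ‖(((((List.finRange N).filter r)).take kk).map z).sum‖ ≤ (1/2)*B + (1/2)*A := by
    intro r f hf hbound kk
    obtain ⟨m, hm, hfm⟩ := aux_exists_take_filter r (List.finRange N) kk
    rw [← hfm]
    have h2 : (((List.finRange N).take m).map f).sum
        = (2:ℝ) • ((((List.finRange N).take m).filter r).map z).sum :=
      aux_sum_two r f z hf _
    have hm' : m ≤ N := by simpa using hm
    have := hbound m hm'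
    rw [h2] at this
    rw [norm_smul] at this
    simp only [Real.norm_ofNat] at this
    linarith
  -- bound on prefixes of P
  have hPbound : ∀ kk, ‖((P.take kk).map z).sum‖ ≤ (1/2)*B + (1/2)*A := by
    refine hprefix p (fun j => z j + s j • z j) ?_ ?_
    · intro a
      rcases hs a with h | h
      · simp only [hp, h, decide_eq_true_eq, if_pos, two_smul]
        rw [one_smul]
      · have : p a = false := by simp [hp, h]; norm_num
        rw [this]
        simp [h]
    · intro m hm
      rw [aux_sum_map_add (fun j => z j) (fun j => s j • z j)]
      exact le_trans (norm_add_le _ _) (add_le_add (hB m hm) (hA m hm))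
  -- bound on prefixes of Q
  have hQbound : ∀ kk, ‖((Q.take kk).map z).sum‖ ≤ (1/2)*B + (1/2)*A := by
    refine hprefix q (fun j => z j - s j • z j) ?_ ?_
    · intro a
      rcases hs a with h | h
      · have : q a = false := by simp [hq, h]; norm_num
        rw [this]
        simp [h]
      · simp only [hq, h, decide_eq_true_eq, if_pos, two_smul]
        rw [neg_smul, one_smul, sub_neg_eq_add]
    · intro m hm
      rw [aux_sum_map_sub (fun j => z j) (fun j => s j • z j)]
      exact le_trans (norm_sub_le _ _) (add_le_add (hB m hm) (hA m hm))
  -- total sum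
  have hpq : ∀ a, (p a = true ∧ q a = false) ∨ (p a = false ∧ q a = true) := by
    intro a
    rcases hs a with h | h
    · left
      constructor
      · simp [hp, h]
      · simp [hq, h]; norm_num
    · right
      constructor
      · simp [hp, h]; norm_num
      · simp [hq, h]
  have htot : (P.map z).sum + (Q.map z).sum = ∑ j, z j := by
    rw [← aux_sum_split p q z hpq, ← List.ofFn_eq_map, List.sum_ofFn]
  by_cases hcase : k ≤ P.length
  · rw [List.take_append_of_le_length hcase]
    calc ‖((P.take k).map z).sum‖ ≤ (1/2)*B + (1/2)*A := hPbound k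
      _ ≤ (1/2)*B + (1/2)*A + c₁ := by linarith
  · push_neg at hcase
    rw [List.take_append, List.take_of_length_le (le_of_lt hcase)]
    set r := k - P.length with hr
    have hsplit : ((P ++ Q.reverse.take r).map z).sum
        = (P.map z).sum + ((Q.reverse.take r).map z).sum := by
      rw [List.map_append, List.sum_append]
    have hQrev : ((Q.reverse.take r).map z).sum
        = (Q.map z).sum - (((Q.take (Q.length - r)).map z)).sum := by
      have hdecomp : Q.reverse.take r ++ Q.reverse.drop r = Q.reverse := List.take_append_drop _ _
      have hsum : ((Q.reverse.take r).map z).sum + ((Q.reverse.drop r).map z).sum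
          = ((Q.reverse.map z)).sum := by
        rw [← List.sum_append, ← List.map_append, hdecomp]
      rw [List.drop_reverse] at hsum
      have h1 : ((Q.reverse.map z)).sum = (Q.map z).sum := by
        rw [List.map_reverse, List.sum_reverse]
      have h2 : (((Q.take (Q.length - r)).reverse.map z)).sum
          = ((Q.take (Q.length - r)).map z).sum := by
        rw [List.map_reverse, List.sum_reverse]
      rw [h1, h2] at hsum
      exact (eq_sub_of_add_eq hsum)
    rw [hsplit, hQrev]
    have hre : (P.map z).sum + ((Q.map z).sum - ((Q.take (Q.length - r)).map z).sum)
        = (∑ j, z j) - ((Q.take (Q.length - r)).map z).sum := by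
      rw [← htot]; abel
    rw [hre]
    calc ‖(∑ j, z j) - ((Q.take (Q.length - r)).map z).sum‖
        ≤ ‖∑ j, z j‖ + ‖((Q.take (Q.length - r)).map z).sum‖ := norm_sub_le _ _
      _ ≤ c₁ + ((1/2)*B + (1/2)*A) := add_le_add hc₁ (hQbound _)
      _ = (1/2)*B + (1/2)*A + c₁ := by ring
end
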